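/- Let G be a locally compact group with the NSS property (some identity neighborhood contains no nontrivial closed subgroup). Then every weakly confined closed subgroup of G is confined. In particular, in a real Lie group every weakly confined closed subgroup is confined. -/

import Mathlib

open scoped Pointwise


/-- In a locally compact group with no small subgroups, every weakly confined closed
subgroup is confined: the compact set meeting all conjugates nontrivially can be chosen
inside `G ∖ {e}`. -/
theorem confined_of_weakly_confined_nss
    {G : Type*} [Group G] [TopologicalSpace G] [IsTopologicalGroup G]
    [LocallyCompactSpace G] [T2Space G]
    (hNSS : ∃ U ∈ nhds (1 : G), ∀ H : Subgroup G, IsClosed (H : Set G) →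
      (H : Set G) ⊆ U → H = ⊥)
    (H : Subgroup G) (hHclosed : IsClosed (H : Set G))
    (hweak : ∃ C : Set G, IsCompact C ∧ ∀ g : G, ∃ x ∈ C, x ≠ 1 ∧ g⁻¹ * x * g ∈ H) :
    ∃ C : Set G, IsCompact C ∧ (1 : G) ∉ C ∧ ∀ g : G, ∃ x ∈ C, g⁻¹ * x * g ∈ H := by
  obtain ⟨U, hU, hUns⟩ := hNSS
  obtain ⟨K, hKnhds, hKU, hKcomp⟩ := local_compact_nhds hU
  -- symmetric compact neighborhood V ⊆ U
  set V : Set G := K ∩ K⁻¹ with hVdef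
  have hVcomp : IsCompact V :=
    hKcomp.inter_right (hKcomp.inv.isClosed)
  have hVnhds : V ∈ nhds (1 : G) := by
    refine Filter.inter_mem hKnhds ?_
    simpa using inv_mem_nhds_one G hKnhds
  have hVU : V ⊆ U := fun v hv => hKU hv.1
  have hVsymm : ∀ v ∈ V, v⁻¹ ∈ V := by
    rintro v ⟨h1, h2⟩
    exact ⟨h2, by simpa using h1⟩
  have hVclosed : IsClosed V := hVcomp.isClosed
  have h1V : (1 : G) ∈ V := mem_of_mem_nhds hVnhds
  obtain ⟨C, hCcomp, hCw⟩ := hweak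
  refine ⟨(V * C) \ interior V, ?_, ?_, ?_⟩
  · have : (V * C) \ interior V = (V * C) ∩ (interior V)ᶜ := rfl
    rw [this]
    exact (hVcomp.mul hCcomp).inter_right (isOpen_interior.isClosed_compl)
  · intro h
    exact h.2 (mem_interior_iff_mem_nhds.mpr hVnhds)
  · intro g
    obtain ⟨x, hxC, hxne, hxH⟩ := hCw g
    -- some positive power of x escapes V
    have hesc : ∃ n : ℕ, 0 < n ∧ x ^ n ∉ V := by
      by_contra hcon
      push_neg at hcon
      have hall : ∀ n : ℕ, x ^ n ∈ V := by
        intro n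
        rcases Nat.eq_zero_or_pos n with rfl | hn
        · simpa using h1V
        · exact hcon n hn
      have hsub : ((Subgroup.zpowers x : Subgroup G) : Set G) ⊆ V := by
        intro y hy
        obtain ⟨k, rfl⟩ := Subgroup.mem_zpowers_iff.mp hy
        rcases k with m | m
        · simpa using hall m
        · have : x ^ (Int.negSucc m) = (x ^ (m + 1))⁻¹ := by
            rw [zpow_negSucc]
          rw [this]
          exact hVsymm _ (hall (m + 1))
      have hclsub : ((Subgroup.zpowers x).topologicalClosure : Set G) ⊆ U := by
        refine Set.Subset.trans ?_ hVU
        exact closure_minimal hsub hVclosed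
      have hbot := hUns (Subgroup.zpowers x).topologicalClosure
        (Subgroup.zpowers x).isClosed_topologicalClosure hclsub
      have hxmem : x ∈ (Subgroup.zpowers x).topologicalClosure :=
        (Subgroup.le_topologicalClosure _) (Subgroup.mem_zpowers x)
      rw [hbot] at hxmem
      exact hxne (Subgroup.mem_bot.mp hxmem)
    classical
    let n := Nat.find hesc
    obtain ⟨hnpos, hnV⟩ : 0 < n ∧ x ^ n ∉ V := Nat.find_spec hesc
    have hprev : x ^ (n - 1) ∈ V := by
      rcases Nat.eq_zero_or_pos (n - 1) with h0 | hpos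
      · rw [h0]; simpa using h1V
      · by_contra hne
        have := Nat.find_min hesc (m := n - 1) (Nat.sub_lt hnpos one_pos)
        exact this ⟨hpos, hne⟩
    refine ⟨x ^ n, ⟨?_, fun hmem => hnV (interior_subset hmem)⟩, ?_⟩
    · have : x ^ n = x ^ (n - 1) * x := by
        rw [← pow_succ, Nat.sub_add_cancel hnpos]
      rw [this]
      exact Set.mul_mem_mul hprev hxC
    · have hconj : (g⁻¹ * x * g) ^ n = g⁻¹ * x ^ n * g := by
        have := conj_pow (a := g⁻¹) (b := x) (i := n)
        simpa using this
      have := H.pow_mem hxH n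
      rwa [hconj] at this
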